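/- Let K be a perfect field of characteristic p > 0 and θ : K[x] → K[x^p], θ(f) = f^p + d^{p-1}f/dx^{p-1}, which is bijective. Write g ∈ K[x^p] as g = Σ_{i=0}^{p-1} μ_i x^{pi} with μ_i ∈ K[x^{p²}], and write θ^{-1}(g) = Σ_{i=0}^{p-1} λ_i x^i with λ_i ∈ K[x^p]. Then: (1) for i = 0, 1, …, p−2, λ_i = μ_i^{1/p} + F^{-1} π_i F^{-1} Σ_{j≥0} Δ^j(μ_{p-1}); and (2) λ_{p-1} = Σ_{i=0}^{p-2} x^{pi} π_i F^{-1} Σ_{j≥0} Δ^j(μ_{p-1}) + x^{p(p-1)} Σ_{j≥1} Δ^j(μ_{p-1}). -/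

import Mathlib

/-!
STATEMENT 12: Let `K` be a perfect field of characteristic `p > 0` and
`θ : K[x] → K[x^p]`, `θ(f) = f^p + d^{p-1}f/dx^{p-1}`.  Write `g = Σ_{i<p} μ_i x^{pi}` with
`μ_i ∈ K[x^{p²}]` and `θ^{-1}(g) = Σ_{i<p} λ_i x^i` with `λ_i ∈ K[x^p]`.  Then:
(1) for `i = 0, …, p−2`: `λ_i = μ_i^{1/p} + F^{-1} π_i F^{-1} Σ_{j≥0} Δ^j(μ_{p-1})`;
(2) `λ_{p-1} = Σ_{i=0}^{p-2} x^{pi} π_i F^{-1} Σ_{j≥0} Δ^j(μ_{p-1})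
      + x^{p(p-1)} Σ_{j≥1} Δ^j(μ_{p-1})`.

Encoding: `μ_i = expand (p²) (m i)`, `λ_i = expand p (l i)`; `F^{-1}` on `K[x^p]` is
`expand p u ↦ u.map (frobeniusEquiv K p).symm`; `π_i` on `K[x^p]` is
`expand p u ↦ expand (p²) (pSlice p i u)`; `Δ` on `K[x^{p²}]` corresponds to `deltaOp` on
coefficient polynomials; and the (locally nilpotent) sums `Σ_{j≥0} Δ^j`, `Σ_{j≥1} Δ^j` are
the finite sums over `j < N`, `1 ≤ j < N` for any `N` beyond which `Δ^j(μ_{p-1}) = 0`.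
-/

noncomputable section

open Polynomial

/-- The map `θ(f) = f^p + d^{p-1}f/dx^{p-1}`. -/
def theta (p : ℕ) (K : Type*) [CommRing K] (f : Polynomial K) : Polynomial K :=
  f ^ p + derivative^[p - 1] f

/-- `pSlice p i m` is the polynomial whose `k`-th coefficient is the `(i + p·k)`-th
coefficient of `m`; i.e. the `i`-th component in the decomposition
`m = Σ_{i<p} (pSlice p i m)(x^p)·x^i`. -/
def pSlice (p i : ℕ) {K : Type*} [CommRing K] (m : Polynomial K) : Polynomial K :=
  ∑ k ∈ Finset.range (m.natDegree + 1), Polynomial.C (m.coeff (i + p * k)) * Polynomial.X ^ k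

/-- The map on coefficient polynomials corresponding to
`Δ = ∂^{[(p-1)p]} ∘ F^{-1} : K[x^{p²}] → K[x^{p²}]`. -/
def deltaOp (p : ℕ) (K : Type*) [Field K] [ExpChar K p] [PerfectRing K p]
    (m : Polynomial K) : Polynomial K :=
  (pSlice p (p - 1) m).map (frobeniusEquiv K p).symm.toRingHom

lemma pSlice_coeff {p : ℕ} (hp : 0 < p) (i : ℕ) {K : Type*} [CommRing K] (m : Polynomial K)
    (k : ℕ) : (pSlice p i m).coeff k = m.coeff (i + p * k) := by
  unfold pSlice
  rw [Polynomial.finset_sum_coeff]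
  simp only [Polynomial.coeff_C_mul, Polynomial.coeff_X_pow, mul_ite, mul_one, mul_zero]
  rw [Finset.sum_ite_eq (Finset.range (m.natDegree + 1)) k (fun k' => m.coeff (i + p * k'))]
  split_ifs with h
  · rfl
  · symm
    apply Polynomial.coeff_eq_zero_of_natDegree_lt
    have h1 : m.natDegree < k := by
      simp only [Finset.mem_range] at h; omega
    have h2 : k ≤ p * k := Nat.le_mul_of_pos_left k hp
    omega

lemma coeff_sum_form {p : ℕ} (hp : 0 < p) {K : Type*} [CommRing K] (a : ℕ → Polynomial K)
    {i : ℕ} (hi : i < p) (k : ℕ) :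
    (∑ j ∈ Finset.range p, Polynomial.expand K p (a j) * Polynomial.X ^ j).coeff (i + p * k)
      = (a i).coeff k := by
  rw [Polynomial.finset_sum_coeff]
  rw [Finset.sum_eq_single i]
  · rw [Polynomial.coeff_mul_X_pow', if_pos (Nat.le_add_right_of_le (Nat.le_refl i)),
      Nat.add_sub_cancel_left, Polynomial.coeff_expand hp, if_pos (Dvd.intro k rfl),
      Nat.mul_div_cancel_left k hp]
  · intro j hj hne
    rw [Polynomial.coeff_mul_X_pow']
    split_ifs with hle
    · rw [Polynomial.coeff_expand hp]
      rw [if_neg]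
      rintro ⟨c, hc⟩
      apply hne
      have hjp : j < p := Finset.mem_range.mp hj
      have : i + p * k = j + p * c := by omega
      have h1 : (i + p * k) % p = i := by
        rw [Nat.add_mul_mod_self_left, Nat.mod_eq_of_lt hi]
      rw [this] at h1
      have h2 : (j + p * c) % p = j := by
        rw [Nat.add_mul_mod_self_left, Nat.mod_eq_of_lt hjp]
      omega
    · rfl
  · intro h; exact absurd (Finset.mem_range.mpr hi) h

lemma sum_pSlice {p : ℕ} (hp : 0 < p) {K : Type*} [CommRing K] (m : Polynomial K) :
    ∑ i ∈ Finset.range p, Polynomial.expand K p (pSlice p i m) * Polynomial.X ^ i = m := by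
  ext n
  have hn : n = n % p + p * (n / p) := by
    rw [Nat.mod_add_div]
  rw [hn, coeff_sum_form hp _ (Nat.mod_lt n hp), pSlice_coeff hp]

lemma pSlice_sum_form {p : ℕ} (hp : 0 < p) {K : Type*} [CommRing K] (a : ℕ → Polynomial K)
    {i : ℕ} (hi : i < p) :
    pSlice p i (∑ j ∈ Finset.range p, Polynomial.expand K p (a j) * Polynomial.X ^ j) = a i := by
  ext k
  rw [pSlice_coeff hp, coeff_sum_form hp a hi]

lemma pSlice_map {p : ℕ} (hp : 0 < p) (i : ℕ) {K : Type*} [CommRing K] (f : K →+* K)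
    (m : Polynomial K) : pSlice p i (m.map f) = (pSlice p i m).map f := by
  ext k
  rw [pSlice_coeff hp, Polynomial.coeff_map, Polynomial.coeff_map, pSlice_coeff hp]

lemma pSlice_add {p : ℕ} (hp : 0 < p) (i : ℕ) {K : Type*} [CommRing K] (a b : Polynomial K) :
    pSlice p i (a + b) = pSlice p i a + pSlice p i b := by
  ext k
  simp [pSlice_coeff hp, Polynomial.coeff_add]

section Delta
variable {p : ℕ} {K : Type*} [Field K] [ExpChar K p] [PerfectRing K p]

lemma deltaOp_add (hp : 0 < p) (a b : Polynomial K) :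
    deltaOp p K (a + b) = deltaOp p K a + deltaOp p K b := by
  unfold deltaOp
  rw [pSlice_add hp, Polynomial.map_add]

lemma deltaOp_zero_of_natDegree_eq_zero (hp : 1 < p) {m : Polynomial K}
    (hm : m.natDegree = 0) : deltaOp p K m = 0 := by
  unfold deltaOp
  have : pSlice p (p - 1) m = 0 := by
    ext k
    rw [pSlice_coeff (by omega) _ m k, Polynomial.coeff_zero]
    apply Polynomial.coeff_eq_zero_of_natDegree_lt
    omega
  rw [this, Polynomial.map_zero]

lemma natDegree_deltaOp_lt (hp : 1 < p) {m : Polynomial K} (hm : 0 < m.natDegree) :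
    (deltaOp p K m).natDegree < m.natDegree := by
  have h1 : (pSlice p (p - 1) m).natDegree < m.natDegree := by
    rcases eq_or_ne (pSlice p (p - 1) m) 0 with h | h
    · rw [h]; simpa using hm
    rw [Polynomial.natDegree_lt_iff_degree_lt h]
    · rw [Polynomial.degree_lt_iff_coeff_zero]
      intro k hk
      have hk' : m.natDegree ≤ k := by exact_mod_cast hk
      rw [pSlice_coeff (by omega)]
      apply Polynomial.coeff_eq_zero_of_natDegree_lt
      have : k ≤ p * k := Nat.le_mul_of_pos_left k (by omega)
      have : k + k ≤ p * k := by nlinarith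
      omega
  calc (deltaOp p K m).natDegree ≤ (pSlice p (p-1) m).natDegree :=
        Polynomial.natDegree_map_le
    _ < m.natDegree := h1

lemma deltaOp_map_zero' (hp : 1 < p) : deltaOp p K 0 = 0 :=
  deltaOp_zero_of_natDegree_eq_zero hp (by simp)

lemma deltaOp_iterate_zero (hp : 1 < p) (k : ℕ) : (deltaOp p K)^[k] (0 : Polynomial K) = 0 := by
  induction k with
  | zero => simp
  | succ k ih => rw [Function.iterate_succ_apply, deltaOp_map_zero' hp]; exact ih

lemma deltaOp_iterate_zero_of_le (hp : 1 < p) :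
    ∀ d (m : Polynomial K), m.natDegree ≤ d → (deltaOp p K)^[d + 1] m = 0 := by
  intro d
  induction d with
  | zero =>
    intro m hm
    rw [Function.iterate_one]
    exact deltaOp_zero_of_natDegree_eq_zero hp (Nat.le_zero.mp hm)
  | succ d ih =>
    intro m hm
    rw [Function.iterate_succ_apply]
    rcases Nat.eq_zero_or_pos m.natDegree with h0 | h0
    · rw [deltaOp_zero_of_natDegree_eq_zero hp h0]
      exact deltaOp_iterate_zero hp _
    · exact ih _ (by have := natDegree_deltaOp_lt hp h0; omega)

lemma deltaOp_map_zero (hp : 1 < p) : deltaOp p K 0 = 0 :=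
  deltaOp_zero_of_natDegree_eq_zero hp (by simp)

lemma deltaOp_iterate_exists_zero (hp : 1 < p) (m : Polynomial K) :
    ∃ M, ∀ n, M ≤ n → (deltaOp p K)^[n] m = 0 := by
  refine ⟨m.natDegree + 1, fun n hn => ?_⟩
  obtain ⟨k, rfl⟩ := Nat.exists_eq_add_of_le hn
  rw [add_comm, Function.iterate_add_apply, deltaOp_iterate_zero_of_le hp _ m (le_refl _)]
  exact deltaOp_iterate_zero hp _
end Delta

section Theta
variable {p : ℕ} {K : Type*} [Field K] [ExpChar K p]

lemma charP_of_expChar_prime (hp : p.Prime) : CharP K p := by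
  cases ‹ExpChar K p› with
  | zero => exact absurd hp Nat.not_prime_one
  | prime _ => assumption

lemma factorial_cast_eq_neg_one (hp : p.Prime) : ((Nat.factorial (p - 1) : ℕ) : K) = -1 := by
  haveI := Fact.mk hp
  haveI : CharP K p := charP_of_expChar_prime hp
  calc ((Nat.factorial (p - 1) : ℕ) : K)
      = (ZMod.castHom (dvd_refl p) K) ((Nat.factorial (p - 1) : ℕ) : ZMod p) := by
        rw [map_natCast]
    _ = (ZMod.castHom (dvd_refl p) K) (-1) := by rw [ZMod.wilsons_lemma]
    _ = -1 := by rw [map_neg, map_one]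

lemma iterate_derivative_expand_mul (hp : p.Prime) (u g : Polynomial K) (k : ℕ) :
    derivative^[k] (Polynomial.expand K p u * g)
      = Polynomial.expand K p u * derivative^[k] g := by
  haveI : CharP K p := charP_of_expChar_prime hp
  induction k with
  | zero => simp
  | succ k ih =>
    simp only [Function.iterate_succ_apply']
    rw [ih, derivative_mul, Polynomial.derivative_expand]
    have hcast : (p : Polynomial K) = 0 := by
      rw [← Polynomial.C_eq_natCast, CharP.cast_eq_zero, Polynomial.C_0]
    rw [hcast]
    ring

lemma theta_sum_eq (hp : p.Prime) (l : ℕ → Polynomial K) :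
    theta p K (∑ i ∈ Finset.range p, Polynomial.expand K p (l i) * Polynomial.X ^ i)
      = (∑ i ∈ Finset.range p,
          Polynomial.expand K (p ^ 2) ((l i).map (frobenius K p)) * Polynomial.X ^ (p * i))
        - Polynomial.expand K p (l (p - 1)) := by
  haveI := Fact.mk hp
  haveI : CharP K p := charP_of_expChar_prime hp
  unfold theta
  have hfrob : (∑ i ∈ Finset.range p, Polynomial.expand K p (l i) * Polynomial.X ^ i) ^ p
      = ∑ i ∈ Finset.range p,
          Polynomial.expand K (p ^ 2) ((l i).map (frobenius K p)) * Polynomial.X ^ (p * i) := by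
    rw [← Polynomial.map_frobenius_expand (p := p)]
    have hstep : Polynomial.expand K p
          (∑ i ∈ Finset.range p, Polynomial.expand K p (l i) * Polynomial.X ^ i)
        = ∑ i ∈ Finset.range p,
            Polynomial.expand K (p ^ 2) (l i) * Polynomial.X ^ (p * i) := by
      rw [map_sum]
      refine Finset.sum_congr rfl fun i _ => ?_
      rw [map_mul, map_pow, Polynomial.expand_X, Polynomial.expand_expand, ← pow_mul, sq]
    rw [hstep, Polynomial.map_sum]
    refine Finset.sum_congr rfl fun i _ => ?_
    rw [Polynomial.map_mul, Polynomial.map_pow, Polynomial.map_X, Polynomial.map_expand]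
  have hderiv : derivative^[p - 1]
        (∑ i ∈ Finset.range p, Polynomial.expand K p (l i) * Polynomial.X ^ i)
      = - Polynomial.expand K p (l (p - 1)) := by
    rw [iterate_derivative_sum]
    have hterm : ∀ i ∈ Finset.range p,
        derivative^[p - 1] (Polynomial.expand K p (l i) * Polynomial.X ^ i)
          = Polynomial.expand K p (l i)
              * (Polynomial.C ((i.descFactorial (p - 1) : ℕ) : K)
                  * Polynomial.X ^ (i - (p - 1))) := by
      intro i _
      rw [iterate_derivative_expand_mul hp, Polynomial.iterate_derivative_X_pow_eq_C_mul]
    rw [Finset.sum_congr rfl hterm]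
    obtain ⟨q, hq⟩ : ∃ q, p = q + 1 := ⟨p - 1, by have := hp.two_le; omega⟩
    subst hq
    rw [Finset.sum_range_succ]
    have hzero : ∀ i ∈ Finset.range q,
        Polynomial.expand K (q + 1) (l i)
          * (Polynomial.C ((i.descFactorial (q + 1 - 1) : ℕ) : K)
              * Polynomial.X ^ (i - (q + 1 - 1))) = 0 := by
      intro i hi
      have : i.descFactorial (q + 1 - 1) = 0 :=
        Nat.descFactorial_eq_zero_iff_lt.mpr (by simpa using Finset.mem_range.mp hi)
      rw [this]
      simp
    rw [Finset.sum_eq_zero hzero, zero_add]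
    simp only [Nat.add_sub_cancel, Nat.descFactorial_self, Nat.sub_self, pow_zero, mul_one]
    have : ((Nat.factorial q : ℕ) : K) = -1 := by
      have h := factorial_cast_eq_neg_one (K := K) hp
      simpa using h
    rw [this]
    simp
  rw [hfrob, hderiv]
  ring
end Theta


section Helpers
variable {p : ℕ} {K : Type*} [CommRing K]

lemma expand_push (hp0 : 0 < p) (c : ℕ → Polynomial K) :
    Polynomial.expand K p
        (∑ i ∈ Finset.range p, Polynomial.expand K p (c i) * Polynomial.X ^ i)
      = ∑ i ∈ Finset.range p, Polynomial.expand K (p ^ 2) (c i) * Polynomial.X ^ (p * i) := by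
  rw [map_sum]
  refine Finset.sum_congr rfl fun i _ => ?_
  rw [map_mul, map_pow, Polynomial.expand_X, Polynomial.expand_expand, ← pow_mul, sq]

lemma expand_sq_sum (hp0 : 0 < p) (m : Polynomial K) :
    Polynomial.expand K p m
      = ∑ i ∈ Finset.range p,
          Polynomial.expand K (p ^ 2) (pSlice p i m) * Polynomial.X ^ (p * i) := by
  conv_lhs => rw [← sum_pSlice hp0 m]
  exact expand_push hp0 _

lemma expand_sum_inj (hp0 : 0 < p) {a b : ℕ → Polynomial K}
    (h : (∑ i ∈ Finset.range p, Polynomial.expand K (p ^ 2) (a i) * Polynomial.X ^ (p * i))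
       = ∑ i ∈ Finset.range p, Polynomial.expand K (p ^ 2) (b i) * Polynomial.X ^ (p * i)) :
    ∀ i < p, a i = b i := by
  have h2 : Polynomial.expand K p
        (∑ i ∈ Finset.range p, Polynomial.expand K p (a i) * Polynomial.X ^ i)
      = Polynomial.expand K p
        (∑ i ∈ Finset.range p, Polynomial.expand K p (b i) * Polynomial.X ^ i) := by
    rw [expand_push hp0, expand_push hp0, h]
  have h3 := Polynomial.expand_injective hp0 h2
  intro i hi
  have h4 := congrArg (pSlice p i) h3
  rwa [pSlice_sum_form hp0 a hi, pSlice_sum_form hp0 b hi] at h4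
end Helpers

section Helpers2
variable {p : ℕ} {K : Type*} [Field K] [ExpChar K p] [PerfectRing K p]

lemma iterate_deltaOp_add (hp : 1 < p) (n : ℕ) (a b : Polynomial K) :
    (deltaOp p K)^[n] (a + b) = (deltaOp p K)^[n] a + (deltaOp p K)^[n] b := by
  induction n generalizing a b with
  | zero => simp
  | succ n ih =>
    simp only [Function.iterate_succ_apply]
    rw [deltaOp_add (by omega), ih]

lemma deltaOp_finset_sum (hp : 1 < p) {ι : Type*} (s : Finset ι) (f : ι → Polynomial K) :
    deltaOp p K (∑ i ∈ s, f i) = ∑ i ∈ s, deltaOp p K (f i) := by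
  induction s using Finset.cons_induction with
  | empty => simpa using deltaOp_map_zero hp
  | cons i s hi ih =>
    rw [Finset.sum_cons, Finset.sum_cons, deltaOp_add (by omega), ih]
end Helpers2

theorem statement12 (p : ℕ) (hp : p.Prime) (K : Type*) [Field K] [ExpChar K p]
    [PerfectRing K p]
    (m l : ℕ → Polynomial K) (N : ℕ)
    (hN : ∀ n : ℕ, N ≤ n → (deltaOp p K)^[n] (m (p - 1)) = 0)
    (hθ : theta p K (∑ i ∈ Finset.range p, Polynomial.expand K p (l i) * Polynomial.X ^ i)
        = ∑ i ∈ Finset.range p,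
            Polynomial.expand K (p ^ 2) (m i) * Polynomial.X ^ (p * i)) :
    (∀ i : ℕ, i < p - 1 →
      Polynomial.expand K p (l i)
        = Polynomial.expand K p ((m i).map (frobeniusEquiv K p).symm.toRingHom)
          + Polynomial.expand K p
              ((pSlice p i
                ((∑ j ∈ Finset.range N, (deltaOp p K)^[j] (m (p - 1))).map
                  (frobeniusEquiv K p).symm.toRingHom)).map
                (frobeniusEquiv K p).symm.toRingHom)) ∧
    Polynomial.expand K p (l (p - 1))
      = (∑ i ∈ Finset.range (p - 1), Polynomial.X ^ (p * i) *
          Polynomial.expand K (p ^ 2)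
            (pSlice p i
              ((∑ j ∈ Finset.range N, (deltaOp p K)^[j] (m (p - 1))).map
                (frobeniusEquiv K p).symm.toRingHom)))
        + Polynomial.X ^ (p * (p - 1)) *
            Polynomial.expand K (p ^ 2)
              (∑ j ∈ Finset.Ico 1 N, (deltaOp p K)^[j] (m (p - 1))) := by
  haveI := Fact.mk hp
  haveI : CharP K p := charP_of_expChar_prime hp
  have hp0 : 0 < p := hp.pos
  have hp1 : 1 < p := hp.one_lt
  have hψφ : ∀ u : Polynomial K,
      (u.map (frobenius K p)).map (frobeniusEquiv K p).symm.toRingHom = u := fun u => by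
    have hcomp : (frobeniusEquiv K p).symm.toRingHom.comp (frobenius K p) = RingHom.id K := by
      ext x; simp
    rw [Polynomial.map_map, hcomp, Polynomial.map_id]
  -- Step 1: key coefficient equations
  have heq1 : (∑ i ∈ Finset.range p,
        Polynomial.expand K (p ^ 2) ((l i).map (frobenius K p)) * Polynomial.X ^ (p * i))
        - Polynomial.expand K p (l (p - 1))
      = ∑ i ∈ Finset.range p,
          Polynomial.expand K (p ^ 2) (m i) * Polynomial.X ^ (p * i) := by
    rw [← theta_sum_eq hp l]; exact hθ
  have heq2 : (∑ i ∈ Finset.range p,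
        Polynomial.expand K (p ^ 2) ((l i).map (frobenius K p)) * Polynomial.X ^ (p * i))
      = ∑ i ∈ Finset.range p,
          Polynomial.expand K (p ^ 2) (m i + pSlice p i (l (p - 1)))
            * Polynomial.X ^ (p * i) := by
    have h := sub_eq_iff_eq_add.mp heq1
    rw [h, expand_sq_sum hp0 (l (p - 1)), ← Finset.sum_add_distrib]
    refine Finset.sum_congr rfl fun i _ => ?_
    rw [map_add, add_mul]
  have hkey : ∀ i < p, (l i).map (frobenius K p) = m i + pSlice p i (l (p - 1)) :=
    expand_sum_inj hp0 heq2
  -- Step 2: solve the fixed-point equation for T = frobenius of l (p-1)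
  set M : Polynomial K := m (p - 1) with hM
  set T : Polynomial K := (l (p - 1)).map (frobenius K p) with hTdef
  have hlp : l (p - 1) = T.map (frobeniusEquiv K p).symm.toRingHom := (hψφ _).symm
  have hTrec : T = M + deltaOp p K T := by
    calc T = M + pSlice p (p - 1) (l (p - 1)) := hkey (p - 1) (by omega)
      _ = M + pSlice p (p - 1) (T.map (frobeniusEquiv K p).symm.toRingHom) := by rw [← hlp]
      _ = M + (pSlice p (p - 1) T).map (frobeniusEquiv K p).symm.toRingHom := by
          rw [pSlice_map hp0]
      _ = M + deltaOp p K T := rfl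
  have hstep5 : ∀ n, T = (∑ j ∈ Finset.range n, (deltaOp p K)^[j] M)
      + (deltaOp p K)^[n] T := by
    intro n
    induction n with
    | zero => simp
    | succ n ih =>
      have h2 : (deltaOp p K)^[n] T = (deltaOp p K)^[n] M + (deltaOp p K)^[n + 1] T := by
        conv_lhs => rw [hTrec]
        rw [iterate_deltaOp_add hp1, ← Function.iterate_succ_apply]
      calc T = (∑ j ∈ Finset.range n, (deltaOp p K)^[j] M) + (deltaOp p K)^[n] T := ih
        _ = (∑ j ∈ Finset.range n, (deltaOp p K)^[j] M)
            + ((deltaOp p K)^[n] M + (deltaOp p K)^[n + 1] T) := by rw [h2]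
        _ = (∑ j ∈ Finset.range (n + 1), (deltaOp p K)^[j] M)
            + (deltaOp p K)^[n + 1] T := by rw [Finset.sum_range_succ]; ring
  have hTS : T = ∑ j ∈ Finset.range N, (deltaOp p K)^[j] M := by
    obtain ⟨M0, hM0⟩ := deltaOp_iterate_exists_zero hp1 T
    have h5 := hstep5 (max N M0)
    rw [hM0 _ (le_max_right _ _), add_zero] at h5
    rw [h5]
    refine (Finset.sum_subset (Finset.range_subset_range.mpr (le_max_left _ _))
      (fun j hj hj2 => hN j ?_)).symm
    simp only [Finset.mem_range, not_lt] at hj2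
    exact hj2
  set S : Polynomial K := ∑ j ∈ Finset.range N, (deltaOp p K)^[j] M with hSdef
  have hlS : l (p - 1) = S.map (frobeniusEquiv K p).symm.toRingHom := by rw [hlp, hTS]
  constructor
  · -- Part 1
    intro i hi
    have hli : l i = (m i).map (frobeniusEquiv K p).symm.toRingHom
        + (pSlice p i (S.map (frobeniusEquiv K p).symm.toRingHom)).map
            (frobeniusEquiv K p).symm.toRingHom := by
      calc l i = ((l i).map (frobenius K p)).map (frobeniusEquiv K p).symm.toRingHom :=
            (hψφ _).symm
        _ = ((m i) + pSlice p i (l (p - 1))).map (frobeniusEquiv K p).symm.toRingHom := by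
            rw [hkey i (by omega)]
        _ = (m i).map (frobeniusEquiv K p).symm.toRingHom
            + (pSlice p i (l (p - 1))).map (frobeniusEquiv K p).symm.toRingHom :=
            Polynomial.map_add _
        _ = _ := by rw [hlS]
    rw [hli, map_add]
  · -- Part 2
    rw [hlS, expand_sq_sum hp0]
    have hrange : Finset.range p = Finset.range ((p - 1) + 1) := by congr 1; omega
    rw [hrange, Finset.sum_range_succ]
    congr 1
    · exact Finset.sum_congr rfl fun i _ => mul_comm _ _
    · rw [mul_comm]
      have hfinal : pSlice p (p - 1) (S.map (frobeniusEquiv K p).symm.toRingHom)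
          = ∑ j ∈ Finset.Ico 1 N, (deltaOp p K)^[j] M := by
        rw [pSlice_map hp0]
        have hdS : deltaOp p K S = ∑ j ∈ Finset.range N, (deltaOp p K)^[j + 1] M := by
          rw [hSdef, deltaOp_finset_sum hp1]
          exact Finset.sum_congr rfl fun j _ => (Function.iterate_succ_apply' _ _ _).symm
        have : (pSlice p (p - 1) S).map (frobeniusEquiv K p).symm.toRingHom
            = deltaOp p K S := rfl
        rw [this, hdS]
        rcases N with _ | N'
        · simp
        · rw [Finset.sum_range_succ, hN (N' + 1) (le_refl _), add_zero,
            Finset.sum_Ico_eq_sum_range]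
          simp only [Nat.add_sub_cancel]
          exact Finset.sum_congr rfl fun j _ => by rw [add_comm 1 j]
      rw [hfinal]
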